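/- Let w ∈ W_{n,q}, let s = LIS(w), and for 1 ≤ t ≤ s let r(w,t) be the largest index such that the longest strictly increasing subsequence of w ending at position r(w,t) has length t. Then the first row of the Hecke insertion tableau P of w is precisely w_{r(w,1)}, w_{r(w,2)}, ..., w_{r(w,s)}. -/

import Mathlib

/-- Replace row `i` of `T` by `r`, appending a new row if `i = T.length`. -/
def setRow (T : List (List ℕ)) (i : ℕ) (r : List ℕ) : List (List ℕ) :=
  if i < T.length then T.set i r else T ++ [r]

/-- One pass of Hecke insertion (BKSTY): insert value `x` starting at row `i`,
with `fuel` bounding the number of rows visited. -/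
def heckeAux : ℕ → ℕ → List (List ℕ) → ℕ → List (List ℕ)
  | 0, _, T, _ => T
  | fuel + 1, x, T, i =>
    let R := T.getD i []
    if R.all (· ≤ x) then
      -- terminating step: adjoin `x` at the end of row `i` if this yields an
      -- increasing tableau, otherwise leave the tableau unchanged
      if (x ∉ R) ∧ (i = 0 ∨ (R.length < (T.getD (i - 1) []).length ∧
            (T.getD (i - 1) []).getD R.length 0 < x)) then
        setRow T i (R ++ [x])
      else T
    else
      -- bumping step: `y` is the smallest entry of the row larger than `x`;
      -- replace it by `x` if this yields an increasing tableau; in any case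
      -- insert `y` into the next row
      let p := (R.takeWhile (· ≤ x)).length
      let y := R.getD p 0
      let T' := if (p = 0 ∨ R.getD (p - 1) 0 < x) ∧
            (i = 0 ∨ (T.getD (i - 1) []).getD p 0 < x) then setRow T i (R.set p x) else T
      heckeAux fuel y T' (i + 1)

/-- Hecke insertion of a value `x` into an increasing tableau `T`. -/
def heckeInsert (T : List (List ℕ)) (x : ℕ) : List (List ℕ) :=
  heckeAux (T.length + 1) x T 0

/-- The insertion tableau `P` of a word under the Hecke algorithm. -/
def heckeP (w : List ℕ) : List (List ℕ) := w.foldl heckeInsert []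

/-- The shape `Heckeshape w` of the Hecke insertion tableau of `w`. -/
def heckeShape (w : List ℕ) : List ℕ := (heckeP w).map List.length

/-- Length of the longest strictly increasing subsequence of a word. -/
noncomputable def LIS (w : List ℕ) : ℕ :=
  sSup {k | ∃ s : List ℕ, s.Sublist w ∧ s.Chain' (· < ·) ∧ s.length = k}

/-- Length of the longest strictly decreasing subsequence of a word. -/
noncomputable def LDS (w : List ℕ) : ℕ :=
  sSup {k | ∃ s : List ℕ, s.Sublist w ∧ s.Chain' (· > ·) ∧ s.length = k}

/-- The length of the longest strictly increasing subsequence of `w` ending at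
(0-indexed) position `i`, i.e. ending with the letter `w_i` within the prefix
`w_0 ⋯ w_i`. -/
noncomputable def LISend (w : List ℕ) (i : ℕ) : ℕ :=
  sSup {k | ∃ s : List ℕ, s.Sublist (w.take (i + 1)) ∧ s.Chain' (· < ·) ∧
    s ≠ [] ∧ s.getLast? = some (w.getD i 0) ∧ s.length = k}

/-- `r w t`: the largest (0-indexed) position such that the longest strictly
increasing subsequence of `w` ending at that position has length `t`. -/
noncomputable def rIdx (w : List ℕ) (t : ℕ) : ℕ :=
  sSup {i | i < w.length ∧ LISend w i = t}

/-- row-0 effect of Hecke insertion -/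
def rowIns (R : List ℕ) (x : ℕ) : List ℕ :=
  if R.all (· ≤ x) then (if x ∈ R then R else R ++ [x])
  else
    let p := (R.takeWhile (· ≤ x)).length
    if p = 0 ∨ R.getD (p - 1) 0 < x then R.set p x else R

lemma setRow_ne_nil (T : List (List ℕ)) (i r) (hT : T ≠ []) : setRow T i r ≠ [] := by
  unfold setRow
  split
  · simpa using hT
  · simp

lemma setRow_getD_zero (T : List (List ℕ)) (i r) (hi : 1 ≤ i) (hT : T ≠ []) :
    (setRow T i r).getD 0 [] = T.getD 0 [] := by
  unfold setRow
  split
  · simp only [List.getD]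
    rw [List.getElem?_set_ne (by omega)]
  · simp only [List.getD]
    rw [List.getElem?_append_left (by simpa [List.length_pos_iff] using hT)]

lemma heckeAux_getD_zero (fuel x T i) (hi : 1 ≤ i) (hT : T ≠ []) :
    (heckeAux fuel x T i).getD 0 [] = T.getD 0 [] := by
  induction fuel generalizing x T i with
  | zero => rfl
  | succ fuel ih =>
    rw [heckeAux]
    simp only
    split
    · split
      · exact setRow_getD_zero _ _ _ hi hT
      · rfl
    · split
      · rw [ih _ _ _ (by omega) (setRow_ne_nil _ _ _ hT), setRow_getD_zero _ _ _ hi hT]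
      · exact ih _ _ _ (by omega) hT

lemma heckeInsert_getD_zero (T x) : (heckeInsert T x).getD 0 [] = rowIns (T.getD 0 []) x := by
  unfold heckeInsert rowIns
  rw [heckeAux]
  simp only
  set R := T.getD 0 [] with hR
  split
  · rename_i hall
    by_cases hx : x ∈ R
    · simp only [hx, if_true]
      rw [if_neg (by simp [hx])]
    · simp only [hx, if_false]
      rw [if_pos (by simp [hx])]
      unfold setRow
      split
      · rename_i hlen
        simp only [List.getD]
        rw [List.getElem?_set_self (by omega)]
        rfl
      · rename_i h
        have hT : T = [] := by
          cases T with
          | nil => rfl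
          | cons a l => simp at h
        simp only [hT, List.nil_append, List.getD]
        have : R = [] := by rw [hR, hT]; rfl
        simp [this]
  · rename_i hall
    have hRne : R ≠ [] := by intro h; rw [h] at hall; simp at hall
    have hTne : T ≠ [] := by
      intro h; apply hRne; rw [hR, h]; rfl
    rw [heckeAux_getD_zero _ _ _ _ (by omega)]
    · split
      · rename_i h
        have h' : (R.takeWhile (· ≤ x)).length = 0 ∨
            R.getD ((R.takeWhile (· ≤ x)).length - 1) 0 < x := h.1
        rw [if_pos h']
        rw [setRow]
        split
        · simp only [List.getD]
          rw [List.getElem?_set_self (by omega)]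
          rfl
        · rename_i hlt
          exact absurd (by simpa [List.length_pos_iff] using hTne) hlt
      · rename_i h
        rw [if_neg]
        intro hc
        exact h ⟨hc, Or.inl trivial⟩
    · split
      · exact setRow_ne_nil _ _ _ hTne
      · exact hTne

lemma heckeP_getD_zero (w : List ℕ) : (heckeP w).getD 0 [] = w.foldl rowIns [] := by
  suffices h : ∀ T, (w.foldl heckeInsert T).getD 0 [] = w.foldl rowIns (T.getD 0 []) by
    simpa [heckeP] using h []
  induction w with
  | nil => intro T; rfl
  | cons a l ih =>
    intro T
    simp only [List.foldl_cons]
    rw [ih, heckeInsert_getD_zero]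

namespace HR

def Ends (w : List ℕ) (i : ℕ) : Set ℕ :=
  {k | ∃ s : List ℕ, s.Sublist (w.take (i + 1)) ∧ s.Chain' (· < ·) ∧
    s ≠ [] ∧ s.getLast? = some (w.getD i 0) ∧ s.length = k}

lemma LISend_eq (w i) : LISend w i = sSup (Ends w i) := rfl

lemma bddAbove_Ends (w i) : BddAbove (Ends w i) := by
  refine ⟨i + 1, fun k hk => ?_⟩
  obtain ⟨s, h1, -, -, -, h5⟩ := hk
  calc k = s.length := h5.symm
    _ ≤ (w.take (i+1)).length := h1.length_le
    _ ≤ i + 1 := by simp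

lemma take_succ_getD (w : List ℕ) {i : ℕ} (hi : i < w.length) :
    w.take (i + 1) = w.take i ++ [w.getD i 0] := by
  rw [List.take_succ, List.getElem?_eq_getElem hi, List.getD_eq_getElem _ _ hi]
  rfl

lemma one_mem_Ends (w : List ℕ) {i : ℕ} (hi : i < w.length) : 1 ∈ Ends w i := by
  refine ⟨[w.getD i 0], ?_, List.isChain_singleton _, by simp, rfl, rfl⟩
  rw [take_succ_getD w hi]
  exact (List.sublist_append_right _ _)

lemma LISend_mem (w : List ℕ) {i : ℕ} (hi : i < w.length) : LISend w i ∈ Ends w i :=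
  Nat.sSup_mem ⟨1, one_mem_Ends w hi⟩ (bddAbove_Ends w i)

lemma le_LISend (w : List ℕ) {i k : ℕ} (hk : k ∈ Ends w i) : k ≤ LISend w i :=
  le_csSup (bddAbove_Ends w i) hk

lemma one_le_LISend (w : List ℕ) {i : ℕ} (hi : i < w.length) : 1 ≤ LISend w i :=
  le_LISend w (one_mem_Ends w hi)

lemma exists_end_idx (w : List ℕ) :
    ∀ (i : ℕ) (s : List ℕ) (v : ℕ), s ≠ [] → s.Sublist (w.take i) →
      s.getLast? = some v →
      ∃ j, j < i ∧ j < w.length ∧ w.getD j 0 = v ∧ s.Sublist (w.take (j + 1)) := by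
  intro i
  induction i with
  | zero => intro s v hne hsub _; simp at hsub; exact absurd hsub hne
  | succ i ih =>
    intro s v hne hsub hlast
    by_cases hlen : i < w.length
    · rw [take_succ_getD w hlen] at hsub
      rcases List.sublist_append_iff.1 hsub with ⟨l1, l2, rfl, h1, h2⟩
      rcases List.sublist_singleton.1 h2 with rfl | rfl
      · rw [List.append_nil] at *
        obtain ⟨j, hj1, hj2, hj3, hj4⟩ := ih _ v hne h1 hlast
        exact ⟨j, by omega, hj2, hj3, hj4⟩
      · refine ⟨i, by omega, hlen, ?_, by rw [take_succ_getD w hlen]; exact hsub⟩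
        rw [List.getLast?_concat] at hlast
        exact Option.some_inj.1 hlast
    · have heq : w.take (i + 1) = w.take i := by
        rw [List.take_of_length_le (by omega), List.take_of_length_le (by omega)]
      rw [heq] at hsub
      obtain ⟨j, hj1, hj2, hj3, hj4⟩ := ih _ v hne hsub hlast
      exact ⟨j, by omega, hj2, hj3, hj4⟩

lemma LISend_lt (w : List ℕ) {j i : ℕ} (hj : j < i) (hi : i < w.length)
    (hw : w.getD j 0 < w.getD i 0) : LISend w j + 1 ≤ LISend w i := by
  obtain ⟨s, hsub, hchain, hne, hlast, hlen⟩ := LISend_mem w (show j < w.length by omega)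
  refine le_LISend w ⟨s ++ [w.getD i 0], ?_, ?_, by simp, List.getLast?_concat, by
    simp [hlen]⟩
  · rw [take_succ_getD w hi]
    refine List.Sublist.append ?_ (List.Sublist.refl _)
    have h1 : w.take (j+1) = (w.take i).take (j+1) := by
      rw [List.take_take, min_eq_left (by omega)]
    exact hsub.trans (h1 ▸ List.take_sublist _ _)
  · refine List.IsChain.append hchain (List.isChain_singleton _) ?_
    intro a ha b hb
    rw [hlast, Option.mem_def, Option.some_inj] at ha
    simp only [List.head?_cons, Option.mem_def, Option.some_inj] at hb
    subst ha; subst hb; exact hw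

lemma getLast?_eq_getD (l : List ℕ) (hne : l ≠ []) :
    l.getLast? = some (l.getD (l.length - 1) 0) := by
  have h : l.length - 1 < l.length := by
    have := List.length_pos_iff.2 hne; omega
  rw [List.getLast?_eq_getElem?, List.getElem?_eq_getElem h, List.getD_eq_getElem _ _ h]

end HR
namespace HR

lemma exists_level (w : List ℕ) (i : ℕ) : i < w.length → ∀ t, 1 ≤ t → t ≤ LISend w i →
    ∃ j, j ≤ i ∧ j < w.length ∧ LISend w j = t ∧ w.getD j 0 ≤ w.getD i 0 ∧
      (t < LISend w i → w.getD j 0 < w.getD i 0) := by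
  induction i using Nat.strong_induction_on with
  | _ i ih =>
    intro hi t ht hle
    rcases eq_or_lt_of_le hle with heq | hlt
    · exact ⟨i, le_refl _, hi, heq.symm, le_refl _, fun h => by omega⟩
    · obtain ⟨s, hsub, hchain, hne, hlast, hlen⟩ := LISend_mem w hi
      have htk : t < s.length := by omega
      have hs1ne : s.take t ≠ [] := by
        intro h
        have := congrArg List.length h
        rw [List.length_take, List.length_nil] at this
        omega
      have hs1len : (s.take t).length = t := by simp; omega
      have hlast1 : (s.take t).getLast? = some (s.getD (t - 1) 0) := by
        rw [getLast?_eq_getD _ hs1ne, hs1len]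
        congr 1
        have h1 : t - 1 < (s.take t).length := by omega
        have h2 : t - 1 < s.length := by omega
        rw [List.getD_eq_getElem _ _ h1, List.getD_eq_getElem _ _ h2, List.getElem_take]
      have hWi : w.getD i 0 = s.getD (s.length - 1) 0 := by
        rw [getLast?_eq_getD _ hne] at hlast
        exact (Option.some_inj.1 hlast.symm)
      have hv_lt : s.getD (t - 1) 0 < w.getD i 0 := by
        rw [hWi]
        have h2 : t - 1 < s.length := by omega
        have h3 : s.length - 1 < s.length := by omega
        rw [List.getD_eq_getElem _ _ h2, List.getD_eq_getElem _ _ h3]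
        exact (List.pairwise_iff_getElem.1 (List.isChain_iff_pairwise.1 hchain)) _ _ h2 h3
          (by omega)
      have hchain1 : (s.take t).Chain' (· < ·) := hchain.sublist (List.take_sublist _ _)
      have hsub1 : (s.take t).Sublist (w.take i) := by
        rw [take_succ_getD w hi] at hsub
        rcases List.sublist_append_iff.1 hsub with ⟨l1, l2, hsplit, h1, h2⟩
        rcases List.sublist_singleton.1 h2 with rfl | rfl
        · rw [List.append_nil] at hsplit
          subst hsplit
          exact (List.take_sublist _ _).trans h1
        · have hl1 : t ≤ l1.length := by
            have := congrArg List.length hsplit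
            simp at this
            omega
          rw [hsplit, List.take_append_of_le_length hl1]
          exact (List.take_sublist _ _).trans h1
      obtain ⟨j'', hj1, hj2, hj3, hj4⟩ :=
        exists_end_idx w i (s.take t) (s.getD (t - 1) 0) hs1ne hsub1 hlast1
      have htle : t ≤ LISend w j'' := by
        apply le_LISend w
        exact ⟨s.take t, hj4, hchain1, hs1ne, by rw [hlast1, hj3], hs1len⟩
      obtain ⟨j, hja, hjb, hjc, hjd, -⟩ := ih j'' hj1 hj2 t ht htle
      refine ⟨j, by omega, hjb, hjc, ?_, fun _ => ?_⟩ <;>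
        [exact le_of_lt (lt_of_le_of_lt hjd (hj3 ▸ hv_lt)); exact lt_of_le_of_lt hjd (hj3 ▸ hv_lt)]

lemma val_ge_of_lt (w : List ℕ) {i j : ℕ} (hij : i < j) (hj : j < w.length)
    (h : LISend w i = LISend w j) : w.getD j 0 ≤ w.getD i 0 := by
  by_contra h'
  push_neg at h'
  have := LISend_lt w hij hj h'
  omega

end HR
namespace HR

noncomputable def Mx (w : List ℕ) (m : ℕ) : ℕ := (Finset.range m).sup (LISend w)

noncomputable def rho (w : List ℕ) (m t : ℕ) : ℕ := sSup {i | i < m ∧ LISend w i = t}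

noncomputable def ev (w : List ℕ) (m t : ℕ) : ℕ := w.getD (rho w m (t + 1)) 0

lemma LISend_le_Mx (w : List ℕ) {i m : ℕ} (h : i < m) : LISend w i ≤ Mx w m :=
  Finset.le_sup (Finset.mem_range.2 h)

lemma Mx_zero (w : List ℕ) : Mx w 0 = 0 := rfl

lemma Mx_succ (w : List ℕ) (m : ℕ) : Mx w (m + 1) = max (Mx w m) (LISend w m) := by
  rw [Mx, Finset.range_add_one, Finset.sup_insert, Mx, max_comm]

lemma occupied (w : List ℕ) {m t : ℕ} (hm : m ≤ w.length) (ht : 1 ≤ t) (hle : t ≤ Mx w m) :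
    ∃ i, i < m ∧ LISend w i = t := by
  have hm0 : 0 < m := by
    by_contra h
    push_neg at h
    interval_cases m
    rw [Mx_zero] at hle
    omega
  obtain ⟨i, hi, heq⟩ := Finset.exists_mem_eq_sup (Finset.range m)
    (Finset.nonempty_range_iff.2 (by omega)) (LISend w)
  rw [Finset.mem_range] at hi
  have heq' : Mx w m = LISend w i := heq
  obtain ⟨j, hj1, -, hj3, -, -⟩ := exists_level w i (by omega) t ht (by omega)
  exact ⟨j, by omega, hj3⟩

lemma bddAbove_rhoSet (w : List ℕ) (m t : ℕ) : BddAbove {i | i < m ∧ LISend w i = t} :=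
  ⟨m, fun i hi => le_of_lt hi.1⟩

lemma rho_spec (w : List ℕ) {m t : ℕ} (hne : ∃ i, i < m ∧ LISend w i = t) :
    rho w m t < m ∧ LISend w (rho w m t) = t ∧
      ∀ i, i < m → LISend w i = t → i ≤ rho w m t := by
  have hmem := Nat.sSup_mem (s := {i | i < m ∧ LISend w i = t})
    (by obtain ⟨i, h1, h2⟩ := hne; exact ⟨i, h1, h2⟩) (bddAbove_rhoSet w m t)
  exact ⟨hmem.1, hmem.2, fun i h1 h2 => le_csSup (bddAbove_rhoSet w m t) ⟨h1, h2⟩⟩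

lemma rho_succ_ne (w : List ℕ) {m t : ℕ} (h : t ≠ LISend w m) :
    rho w (m + 1) t = rho w m t := by
  have hset : {i | i < m + 1 ∧ LISend w i = t} = {i | i < m ∧ LISend w i = t} := by
    ext i
    simp only [Set.mem_setOf_eq]
    constructor
    · rintro ⟨h1, h2⟩
      refine ⟨?_, h2⟩
      rcases Nat.lt_succ_iff_lt_or_eq.1 h1 with h' | rfl
      · exact h'
      · exact absurd h2.symm h
    · rintro ⟨h1, h2⟩
      exact ⟨by omega, h2⟩
  rw [rho, hset, rho]

lemma rho_succ_self (w : List ℕ) (m : ℕ) : rho w (m + 1) (LISend w m) = m := by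
  apply le_antisymm
  · exact csSup_le ⟨m, by simp⟩ (fun i hi => by have := hi.1; omega)
  · exact le_csSup (bddAbove_rhoSet w _ _) ⟨by omega, rfl⟩

lemma ev_min (w : List ℕ) {m t : ℕ} (hm : m ≤ w.length)
    (hne : ∃ i, i < m ∧ LISend w i = t + 1) :
    ∀ i, i < m → LISend w i = t + 1 → ev w m t ≤ w.getD i 0 := by
  intro i h1 h2
  obtain ⟨hr1, hr2, hr3⟩ := rho_spec w hne
  rcases eq_or_lt_of_le (hr3 i h1 h2) with heq | hlt
  · rw [ev, ← heq]
  · exact val_ge_of_lt w hlt (by omega) (by rw [h2, hr2])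

end HR

namespace HR

lemma step_lt (w : List ℕ) {m t : ℕ} (hm : m < w.length) (h : t + 1 < LISend w m) :
    ev w m t < w.getD m 0 := by
  obtain ⟨j, hj1, hj2, hj3, -, hj5⟩ := exists_level w m hm (t + 1) (by omega) (by omega)
  have hjm : j ≠ m := fun h' => by rw [h'] at hj3; omega
  have h1 := ev_min w (le_of_lt hm) ⟨j, by omega, hj3⟩ j (by omega) hj3
  have h2 := hj5 h
  omega

lemma step_ge (w : List ℕ) {m : ℕ} (hm : m < w.length) (hL : LISend w m ≤ Mx w m) :
    w.getD m 0 ≤ ev w m (LISend w m - 1) := by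
  have hL1 : 1 ≤ LISend w m := one_le_LISend w hm
  have hne : ∃ i, i < m ∧ LISend w i = (LISend w m - 1) + 1 := by
    obtain ⟨i, h1, h2⟩ := occupied w (le_of_lt hm) hL1 hL
    exact ⟨i, h1, by omega⟩
  obtain ⟨hr1, hr2, -⟩ := rho_spec w hne
  by_contra h
  push_neg at h
  have h' : w.getD (rho w m (LISend w m - 1 + 1)) 0 < w.getD m 0 := h
  have := LISend_lt w hr1 hm h'
  omega

lemma step_gt (w : List ℕ) {m t : ℕ} (hm : m < w.length) (hL : LISend w m < t + 1)
    (ht : t + 1 ≤ Mx w m) : w.getD m 0 < ev w m t := by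
  have hne := occupied w (le_of_lt hm) (show 1 ≤ t + 1 by omega) ht
  obtain ⟨hr1, hr2, -⟩ := rho_spec w hne
  by_contra h
  push_neg at h
  have h' : w.getD (rho w m (t + 1)) 0 ≤ w.getD m 0 := h
  obtain ⟨j, hj1, hj2, hj3, hj4, hj5⟩ := exists_level w (rho w m (t + 1)) (by omega)
    (LISend w m) (one_le_LISend w hm) (by omega)
  have hwj : w.getD j 0 < w.getD (rho w m (t + 1)) 0 := hj5 (by omega)
  have := LISend_lt w (show j < m by omega) hm (by omega)
  omega

lemma L_le (w : List ℕ) {m : ℕ} (hm : m < w.length) : LISend w m ≤ Mx w m + 1 := by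
  by_contra h
  push_neg at h
  obtain ⟨j, hj1, hj2, hj3, -, -⟩ := exists_level w m hm (Mx w m + 1) (by omega) (by omega)
  have hjm : j ≠ m := by intro h'; rw [h'] at hj3; omega
  have := LISend_le_Mx w (show j < m by omega)
  omega

lemma takeWhile_length_eq (P : ℕ → Bool) : ∀ (l : List ℕ) (p : ℕ), p ≤ l.length →
    (∀ j, j < p → P (l.getD j 0) = true) → (p < l.length → P (l.getD p 0) = false) →
    (l.takeWhile P).length = p := by
  intro l
  induction l with
  | nil =>
    intro p hp _ _
    simp at hp
    simp [hp]
  | cons a l ih =>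
    intro p hp h1 h2
    cases p with
    | zero =>
      have := h2 (by simp)
      rw [List.takeWhile_cons]
      simp only [List.getD_cons_zero] at this
      simp [this]
    | succ q =>
      have ha : P a = true := h1 0 (by omega)
      rw [List.takeWhile_cons]
      simp only [ha, if_true, List.length_cons]
      rw [ih q (by simp at hp; omega) (fun j hj => h1 (j + 1) (by omega))
        (fun hh => h2 (by simp; omega))]

lemma getD_map_range (f : ℕ → ℕ) {n j : ℕ} (h : j < n) :
    ((List.range n).map f).getD j 0 = f j := by
  rw [List.getD_eq_getElem _ _ (by simpa using h)]
  simp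

end HR
namespace HR

lemma main (w : List ℕ) : ∀ m, m ≤ w.length →
    (w.take m).foldl rowIns [] = (List.range (Mx w m)).map (ev w m) := by
  intro m
  induction m with
  | zero => intro _; simp [Mx_zero]
  | succ m ih =>
    intro hm1
    have hm : m < w.length := by omega
    rw [take_succ_getD w hm, List.foldl_append, ih (by omega)]
    simp only [List.foldl_cons, List.foldl_nil]
    set x := w.getD m 0 with hx
    set L := LISend w m with hLdef
    set s := Mx w m with hs
    have hL1 : 1 ≤ L := one_le_LISend w hm
    have hLs : L ≤ s + 1 := L_le w hm
    have hevnew : ev w (m + 1) (L - 1) = x := by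
      rw [ev, show L - 1 + 1 = L by omega, hLdef, rho_succ_self]
    have hev_ne : ∀ t, t + 1 ≠ L → ev w (m + 1) t = ev w m t := fun t ht => by
      rw [ev, ev, rho_succ_ne w (show t + 1 ≠ LISend w m from ht)]
    have hentry : ∀ j, j < s → ((List.range s).map (ev w m)).getD j 0 = ev w m j :=
      fun j hj => getD_map_range _ hj
    by_cases hcase : L = s + 1
    · -- append case
      have hall : ∀ t, t < s → ev w m t < x := fun t ht => step_lt w hm (by omega)
      have hrow : rowIns ((List.range s).map (ev w m)) x =
          (List.range s).map (ev w m) ++ [x] := by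
        rw [rowIns, if_pos, if_neg]
        · intro h
          simp only [List.mem_map, List.mem_range] at h
          obtain ⟨t, ht, heq⟩ := h
          have := hall t ht
          omega
        · rw [List.all_eq_true]
          intro a ha
          simp only [List.mem_map, List.mem_range] at ha
          obtain ⟨t, ht, rfl⟩ := ha
          simp only [decide_eq_true_eq]
          exact le_of_lt (hall t ht)
      rw [hrow]
      have hM : Mx w (m + 1) = s + 1 := by rw [Mx_succ]; omega
      rw [hM, List.range_succ, List.map_append]
      congr 1
      · refine (List.map_congr_left fun t ht => ?_).symm
        rw [List.mem_range] at ht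
        exact hev_ne t (by omega)
      · simp only [List.map_cons, List.map_nil]
        rw [show s = L - 1 by omega, hevnew]
    · have hcs : L ≤ s := by omega
      have hxle : x ≤ ev w m (L - 1) := step_ge w hm (by omega)
      have hM : Mx w (m + 1) = s := by rw [Mx_succ]; omega
      have hRHS : (List.range (Mx w (m + 1))).map (ev w (m + 1)) =
          ((List.range s).map (ev w m)).set (L - 1) x := by
        rw [hM]
        apply List.ext_getElem
        · simp
        · intro i h1 h2
          simp only [List.getElem_map, List.getElem_range]
          rw [List.getElem_set]
          split
          · rename_i hiL
            rw [← hiL]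
            exact hevnew
          · rename_i hiL
            simp only [List.getElem_map, List.getElem_range]
            exact hev_ne i (by omega)
      rcases eq_or_lt_of_le hxle with heq | hlt
      · -- value already present: row unchanged
        have hrow : rowIns ((List.range s).map (ev w m)) x = (List.range s).map (ev w m) := by
          rw [rowIns]
          by_cases hall : ((List.range s).map (ev w m)).all (· ≤ x)
          · rw [if_pos hall, if_pos]
            rw [heq]
            exact List.mem_map.2 ⟨L - 1, List.mem_range.2 (by omega), rfl⟩
          · rw [if_neg hall]
            have hp : (((List.range s).map (ev w m)).takeWhile (· ≤ x)).length = L := by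
              apply takeWhile_length_eq
              · simp [hcs]
              · intro j hj
                rw [hentry j (by omega)]
                simp only [decide_eq_true_eq]
                rcases eq_or_lt_of_le (show j + 1 ≤ L by omega) with hj1 | hj1
                · rw [show j = L - 1 by omega, ← heq]
                · exact le_of_lt (step_lt w hm hj1)
              · intro hLs'
                simp only [List.length_map, List.length_range] at hLs'
                rw [hentry L hLs']
                simp only [decide_eq_true_eq, decide_eq_false_iff_not, not_le]
                exact step_gt w hm (by omega) (by omega)
            simp only [hp]
            have hcond : ¬(L = 0 ∨ (List.map (ev w m) (List.range s)).getD (L - 1) 0 < x) := by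
              rw [hentry (L - 1) (by omega), ← heq]
              push_neg
              exact ⟨by omega, le_refl x⟩
            rw [if_neg hcond]
        rw [hrow, hRHS]
        apply List.ext_getElem
        · simp
        · intro i h1 h2
          rw [List.getElem_set]
          split
          · rename_i hiL
            simp only [List.getElem_map, List.getElem_range]
            rw [← hiL]
            exact heq.symm
          · rfl
      · -- bumping case: replace entry L-1 by x
        have hrow : rowIns ((List.range s).map (ev w m)) x =
            ((List.range s).map (ev w m)).set (L - 1) x := by
          rw [rowIns, if_neg]
          · have hp : (((List.range s).map (ev w m)).takeWhile (· ≤ x)).length = L - 1 := by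
              apply takeWhile_length_eq
              · simp; omega
              · intro j hj
                rw [hentry j (by omega)]
                simp only [decide_eq_true_eq]
                exact le_of_lt (step_lt w hm (by omega))
              · intro _
                rw [hentry (L - 1) (by omega)]
                simp only [decide_eq_false_iff_not, decide_eq_true_eq, not_le]
                exact hlt
            simp only [hp]
            rw [if_pos]
            rcases Nat.eq_or_lt_of_le hL1 with h1 | h1
            · exact Or.inl (by omega)
            · refine Or.inr ?_
              rw [hentry (L - 1 - 1) (by omega)]
              exact step_lt w hm (by omega)
          · intro hall
            rw [List.all_eq_true] at hall
            have := hall (ev w m (L - 1))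
              (List.mem_map.2 ⟨L - 1, List.mem_range.2 (by omega), rfl⟩)
            simp only [decide_eq_true_eq] at this
            omega
        rw [hrow, hRHS]

end HR
namespace HR

lemma LIS_eq_Mx (w : List ℕ) : LIS w = Mx w w.length := by
  unfold LIS
  apply le_antisymm
  · refine csSup_le ?_ ?_
    · exact ⟨0, ⟨[], List.nil_sublist _, List.isChain_nil, rfl⟩⟩
    rintro k ⟨s, hsub, hchain, hlen⟩
    rcases eq_or_ne s [] with rfl | hne
    · simp at hlen
      omega
    · have hlast := getLast?_eq_getD s hne
      have hsub' : s.Sublist (w.take w.length) := by rw [List.take_length]; exact hsub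
      obtain ⟨j, hj1, hj2, hj3, hj4⟩ := exists_end_idx w w.length s _ hne hsub' hlast
      have h1 : k ≤ LISend w j := le_LISend w ⟨s, hj4, hchain, hne, by rw [hlast, hj3], hlen⟩
      have h2 := LISend_le_Mx w (show j < w.length from hj1)
      omega
  · rw [Mx]
    apply Finset.sup_le
    intro i hi
    rw [Finset.mem_range] at hi
    obtain ⟨s, hsub, hchain, hne, hlast, hlen⟩ := LISend_mem w hi
    apply le_csSup
    · exact ⟨w.length, fun k hk => by
        obtain ⟨s', h1, -, h3⟩ := hk
        exact h3 ▸ h1.length_le⟩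
    · exact ⟨s, hsub.trans (List.take_sublist _ _), hchain, hlen⟩

lemma final (w : List ℕ) : w.foldl rowIns [] =
    (List.range (LIS w)).map (fun t => w.getD (rIdx w (t + 1)) 0) := by
  have h1 : w.foldl rowIns [] = (w.take w.length).foldl rowIns [] := by
    rw [List.take_length]
  rw [h1, HR.main w w.length le_rfl, LIS_eq_Mx]
  rfl

end HR

/-- The first row of the Hecke insertion tableau of `w` is precisely
`w_{r(w,1)}, w_{r(w,2)}, …, w_{r(w,s)}` where `s = LIS w`. -/
theorem firstRow_eq_rIdx (n q : ℕ) (w : List ℕ) (hlen : w.length = n)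
    (hent : ∀ x ∈ w, 1 ≤ x ∧ x ≤ q) :
    (heckeP w).getD 0 [] =
      (List.range (LIS w)).map (fun t => w.getD (rIdx w (t + 1)) 0) := by
  rw [heckeP_getD_zero]
  exact HR.final w
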